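/- Let A : [0,∞) → ℝ be continuous and define m_{1,A}(s,T) = exp(∫_s^T A) and σ²_A(s,T) = ∫_s^T exp(2∫_{s'}^T A) ds'. Then for 0 ≤ s < T: ∫_s^T m_{1,A}(s')² / σ⁴_A(s')·ds' = m_{1,A}(s)² σ²_A(s,T) / (σ²_A(T) σ²_A(s)), where m_{1,A}(s) = m_{1,A}(0,s) and σ²_A(s) = σ²_A(0,s), provided σ²_A(s) > 0. -/

import Mathlib

open MeasureTheory Set intervalIntegral

/-- Two-parameter `m₁,A(s,T) = exp(∫ₛᵀ A)`. -/
noncomputable def m1A2 (A : ℝ → ℝ) (s T : ℝ) : ℝ := Real.exp (∫ v in s..T, A v)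

/-- Two-parameter `σ²_A(s,T) = ∫ₛᵀ exp(2∫_{s'}ᵀ A) ds'`. -/
noncomputable def sig2A2 (A : ℝ → ℝ) (s T : ℝ) : ℝ :=
  ∫ u in s..T, Real.exp (2 * ∫ v in u..T, A v)

theorem sigma_quartic_integral_identity
    (A : ℝ → ℝ) (hA : Continuous A) (s T : ℝ) (hs : 0 ≤ s) (hsT : s < T)
    (hσ : 0 < sig2A2 A 0 s) :
    (∫ s' in s..T, (m1A2 A 0 s') ^ 2 / (sig2A2 A 0 s') ^ 2)
      = (m1A2 A 0 s) ^ 2 * sig2A2 A s T / (sig2A2 A 0 T * sig2A2 A 0 s) := by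
  classical
  set I : ℝ → ℝ := fun x => ∫ v in (0:ℝ)..x, A v with hIdef
  have hI' : ∀ x, HasDerivAt I (A x) x := by
    intro x
    exact intervalIntegral.integral_hasDerivAt_right (hA.intervalIntegrable 0 x)
      (hA.stronglyMeasurableAtFilter _ _) hA.continuousAt
  have hIcont : Continuous I := by
    rw [continuous_iff_continuousAt]; exact fun x => (hI' x).continuousAt
  have hgcont : Continuous fun u => Real.exp (-(2 * I u)) :=
    (Real.continuous_exp.comp ((continuous_const.mul hIcont).neg))
  set J : ℝ → ℝ := fun x => ∫ u in (0:ℝ)..x, Real.exp (-(2 * I u)) with hJdef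
  have hJ' : ∀ x, HasDerivAt J (Real.exp (-(2 * I x))) x := by
    intro x
    exact intervalIntegral.integral_hasDerivAt_right (hgcont.intervalIntegrable 0 x)
      (hgcont.stronglyMeasurableAtFilter _ _) hgcont.continuousAt
  have hJcont : Continuous J := by
    rw [continuous_iff_continuousAt]; exact fun x => (hJ' x).continuousAt
  -- decomposition of interval integrals of A
  have hIsub : ∀ u b : ℝ, (∫ v in u..b, A v) = I b - I u := by
    intro u b
    have h : (∫ v in (0:ℝ)..u, A v) + (∫ v in u..b, A v) = ∫ v in (0:ℝ)..b, A v :=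
      intervalIntegral.integral_add_adjacent_intervals
      (hA.intervalIntegrable 0 u) (hA.intervalIntegrable u b)
    simp only [hIdef]
    linarith [h]
  -- sig2A2 in terms of I and J
  have hsig : ∀ a b : ℝ, sig2A2 A a b = Real.exp (2 * I b) * (J b - J a) := by
    intro a b
    unfold sig2A2
    have h1 : ∀ u : ℝ, Real.exp (2 * ∫ v in u..b, A v)
        = Real.exp (2 * I b) * Real.exp (-(2 * I u)) := by
      intro u
      rw [hIsub, ← Real.exp_add]
      ring_nf
    rw [intervalIntegral.integral_congr
      (g := fun u => Real.exp (2 * I b) * Real.exp (-(2 * I u))) (fun u _ => h1 u)]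
    rw [intervalIntegral.integral_const_mul]
    congr 1
    simp only [hJdef]
    exact (intervalIntegral.integral_interval_sub_left (hgcont.intervalIntegrable 0 b)
      (hgcont.intervalIntegrable 0 a)).symm
  have hm1 : ∀ b : ℝ, m1A2 A 0 b = Real.exp (I b) := by intro b; rfl
  have hJ0 : J 0 = 0 := intervalIntegral.integral_same
  -- positivity of J on [s, T]
  have hJs : 0 < J s := by
    have h := hσ
    rw [hsig, hJ0, sub_zero] at h
    nlinarith [Real.exp_pos (2 * I s)]
  have hJmono : ∀ ⦃x y : ℝ⦄, x ≤ y → J x ≤ J y := by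
    intro x y hxy
    have h : J y - J x = ∫ u in x..y, Real.exp (-(2 * I u)) := by
      simp only [hJdef]
      exact intervalIntegral.integral_interval_sub_left (hgcont.intervalIntegrable 0 y)
        (hgcont.intervalIntegrable 0 x)
    nlinarith [intervalIntegral.integral_nonneg (μ := volume) hxy
      (fun u _ => le_of_lt (Real.exp_pos (-(2 * I u)))), h]
  have hJposOn : ∀ x, s ≤ x → 0 < J x := fun x hx => lt_of_lt_of_le hJs (hJmono hx)
  have hJT : 0 < J T := hJposOn T hsT.le
  have hJsT : J s < J T := by
    have h : J T - J s = ∫ u in s..T, Real.exp (-(2 * I u)) := by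
      simp only [hJdef]
      exact intervalIntegral.integral_interval_sub_left (hgcont.intervalIntegrable 0 T)
        (hgcont.intervalIntegrable 0 s)
    have hpos : 0 < ∫ u in s..T, Real.exp (-(2 * I u)) :=
      intervalIntegral.intervalIntegral_pos_of_pos
        (hgcont.intervalIntegrable s T) (fun u => Real.exp_pos _) hsT
    linarith
  -- rewrite the integrand
  have hint : ∀ x : ℝ, (m1A2 A 0 x) ^ 2 / (sig2A2 A 0 x) ^ 2
      = Real.exp (-(2 * I x)) / (J x) ^ 2 := by
    intro x
    rw [hm1, hsig, hJ0, sub_zero]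
    have he2 : Real.exp (I x) ^ 2 = Real.exp (2 * I x) := by
      rw [← Real.exp_nat_mul]; norm_num
    rw [mul_pow, he2, ← div_div]
    congr 1
    rw [pow_two, ← Real.exp_add]
    rw [div_eq_iff (Real.exp_ne_zero _), ← Real.exp_add]
    ring_nf
  -- evaluate the integral via FTC
  have hFTC : (∫ x in s..T, Real.exp (-(2 * I x)) / (J x) ^ 2)
      = (J s)⁻¹ - (J T)⁻¹ := by
    have hmem : ∀ x ∈ uIcc s T, J x ≠ 0 := by
      intro x hx
      rw [uIcc_of_le hsT.le] at hx
      exact (hJposOn x hx.1).ne'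
    have hderiv : ∀ x ∈ uIcc s T,
        HasDerivAt (fun y => -(J y)⁻¹) (Real.exp (-(2 * I x)) / (J x) ^ 2) x := by
      intro x hx
      have h := ((hJ' x).inv (hmem x hx)).neg
      rw [neg_div, neg_neg] at h
      exact h
    have hInt : IntervalIntegrable (fun x => Real.exp (-(2 * I x)) / (J x) ^ 2)
        volume s T := by
      apply ContinuousOn.intervalIntegrable
      exact hgcont.continuousOn.div ((hJcont.pow 2).continuousOn)
        (fun x hx => pow_ne_zero 2 (hmem x hx))
    have := intervalIntegral.integral_eq_sub_of_hasDerivAt hderiv hInt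
    rw [this]; ring
  calc (∫ s' in s..T, (m1A2 A 0 s') ^ 2 / (sig2A2 A 0 s') ^ 2)
      = ∫ x in s..T, Real.exp (-(2 * I x)) / (J x) ^ 2 := by
        simp_rw [hint]
    _ = (J s)⁻¹ - (J T)⁻¹ := hFTC
    _ = (m1A2 A 0 s) ^ 2 * sig2A2 A s T / (sig2A2 A 0 T * sig2A2 A 0 s) := by
        rw [hm1, hsig, hsig, hsig, hJ0, sub_zero, sub_zero]
        have he2 : Real.exp (I s) ^ 2 = Real.exp (2 * I s) := by
          rw [← Real.exp_nat_mul]; norm_num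
        rw [he2]
        field_simp
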